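/- Let A be an n×n matrix with all cycle-sums of all sizes equal to zero (C_S(A) = 0 for all nonempty S ⊆ {1,...,n}). Then A is permutation-conjugate to a strictly upper triangular matrix, i.e. there exists a permutation matrix P such that P A P^{-1} is strictly upper triangular. -/

import Mathlib

open scoped Classical

/-- The cycle-sum `C_S(A)`: sum over all cyclic orderings of `S` of the
corresponding cyclic products of entries of `A`. -/
noncomputable def cycleSum {n : ℕ} (A : Matrix (Fin n) (Fin n) ℂ) (S : Finset (Fin n)) : ℂ :=
  ∑ σ ∈ Finset.univ.filter
      (fun σ : Equiv.Perm (Fin n) =>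
        σ.IsCycleOn (S : Set (Fin n)) ∧ ∀ i ∉ S, σ i = i),
    ∏ i ∈ S, A i (σ i)

/-- The principal minor of `A` with row and column set `S`. -/
noncomputable def pminor {n : ℕ} (A : Matrix (Fin n) (Fin n) ℂ) (S : Finset (Fin n)) : ℂ :=
  (A.submatrix (fun i : S => (i : Fin n)) (fun i : S => (i : Fin n))).det

/-- The permutation matrix `P_σ = [e_{σ(1)}, …, e_{σ(n)}]`. -/
noncomputable def permMat {n : ℕ} (σ : Equiv.Perm (Fin n)) : Matrix (Fin n) (Fin n) ℂ :=
  Matrix.of fun i j => if i = σ j then 1 else 0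

/-- A matrix all of whose cycle-sums vanish is permutation-conjugate to a
strictly upper triangular matrix. -/
lemma cycle_step {n : ℕ} (A : Matrix (Fin n) (Fin n) ℂ) (S : Finset (Fin n))
    (σ τ : Equiv.Perm (Fin n))
    (hσcycle : σ.IsCycleOn (S : Set (Fin n))) (hσfix : ∀ i ∉ S, σ i = i)
    (hτcycle : τ.IsCycleOn (S : Set (Fin n))) (hτfix : ∀ i ∉ S, τ i = i)
    (hτne : τ ≠ σ)
    (hσprod : ∏ i ∈ S, A i (σ i) ≠ 0) (hτprod : ∏ i ∈ S, A i (τ i) ≠ 0) :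
    ∃ (l' : List (Fin n)), l'.Nodup ∧ l' ≠ [] ∧ l'.length < S.card ∧
      (∀ i : ℕ, (hi : i < l'.length) →
        A (l'[i]'hi) (l'[(i+1) % l'.length]'(Nat.mod_lt _ (by omega))) ≠ 0) := by
  have hσf : ∀ x ∈ S, A x (σ x) ≠ 0 := fun x hx => Finset.prod_ne_zero_iff.mp hσprod x hx
  have hτf : ∀ x ∈ S, A x (τ x) ≠ 0 := fun x hx => Finset.prod_ne_zero_iff.mp hτprod x hx
  -- a point where σ and τ differ
  have hexv : ∃ v, σ v ≠ τ v := by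
    by_contra hc
    push_neg at hc
    exact hτne (Equiv.ext fun x => (hc x).symm)
  obtain ⟨v, hv⟩ := hexv
  have hvS : v ∈ S := by
    by_contra hvS
    exact hv ((hσfix v hvS).trans (hτfix v hvS).symm)
  have hσvS : σ v ∈ S := hσcycle.1.mapsTo hvS
  have hτvS : τ v ∈ S := hτcycle.1.mapsTo hvS
  have hnt : (S : Set (Fin n)).Nontrivial := ⟨σ v, hσvS, τ v, hτvS, hv⟩
  have hsv : σ v ≠ v := hσcycle.apply_ne hnt hvS
  have hm2 : 2 ≤ S.card :=
    Finset.one_lt_card.mpr ⟨σ v, hσvS, v, hvS, hsv⟩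
  -- iterates of τ starting from σ v
  have hxmem : ∀ j : ℕ, (τ ^ j) (σ v) ∈ S := by
    intro j
    induction j with
    | zero => simpa using hσvS
    | succ j ihj => rw [pow_succ', Equiv.Perm.mul_apply]; exact hτcycle.1.mapsTo ihj
  -- first return time
  have hex : ∃ k, 0 < k ∧ (τ ^ k) (σ v) = v := by
    obtain ⟨j, hjlt, hjv⟩ := hτcycle.exists_pow_eq hσvS hvS
    rcases Nat.eq_zero_or_pos j with rfl | hj
    · exact absurd (by simpa using hjv) hsv
    · exact ⟨j, hj, hjv⟩
  set k0 := Nat.find hex with hk0def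
  obtain ⟨hk0pos, hk0v⟩ := Nat.find_spec hex
  have hk0lt : k0 < S.card := by
    obtain ⟨j, hjlt, hjv⟩ := hτcycle.exists_pow_eq hσvS hvS
    rcases Nat.eq_zero_or_pos j with rfl | hj
    · exact absurd (by simpa using hjv) hsv
    · exact lt_of_le_of_lt (Nat.find_min' hex ⟨hj, hjv⟩) hjlt
  have hk1 : k0 + 1 < S.card := by
    rcases lt_or_eq_of_le (Nat.succ_le_of_lt hk0lt) with h' | h'
    · exact h'
    · exfalso
      have h1 : (τ ^ (k0 + 1)) (σ v) = τ v := by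
        rw [pow_succ', Equiv.Perm.mul_apply, hk0v]
      have h2 : (τ ^ S.card) (σ v) = σ v := hτcycle.pow_card_apply hσvS
      have h' : k0 + 1 = S.card := h'
      rw [← h'] at h2
      exact hv (h2.symm.trans h1)
  refine ⟨v :: (List.range k0).map (fun j => (τ ^ j) (σ v)), ?_, by simp, ?_, ?_⟩
  · rw [List.nodup_cons]
    constructor
    · simp only [List.mem_map, List.mem_range, not_exists, not_and]
      intro j hj hjv
      rcases Nat.eq_zero_or_pos j with rfl | hjpos
      · exact hsv (by simpa using hjv)
      · exact Nat.find_min hex hj ⟨hjpos, hjv⟩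
    · refine List.Nodup.map_on ?_ (List.nodup_range)
      intro x hx y hy hxy
      rw [List.mem_range] at hx hy
      have := (hτcycle.pow_apply_eq_pow_apply hσvS).mp hxy
      rwa [Nat.ModEq, Nat.mod_eq_of_lt (hx.trans hk0lt),
        Nat.mod_eq_of_lt (hy.trans hk0lt)] at this
  · simpa using hk1
  · intro i hi
    simp only [List.length_cons, List.length_map, List.length_range] at hi ⊢
    rcases i with _ | j
    · have h1 : (0 + 1) % (k0 + 1) = 1 := Nat.mod_eq_of_lt (by omega)
      simp only [h1, List.getElem_cons_zero, List.getElem_cons_succ,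
        List.getElem_map, List.getElem_range, pow_zero, Equiv.Perm.coe_one, id_eq]
      exact hσf v hvS
    · have hjk : j + 1 ≤ k0 := by omega
      rcases lt_or_eq_of_le hjk with h' | h'
      · have h1 : (j + 1 + 1) % (k0 + 1) = j + 2 := Nat.mod_eq_of_lt (by omega)
        simp only [h1, List.getElem_cons_succ, List.getElem_map, List.getElem_range]
        have : (τ ^ (j + 1)) (σ v) = τ ((τ ^ j) (σ v)) := by
          rw [pow_succ', Equiv.Perm.mul_apply]
        rw [this]
        exact hτf _ (hxmem j)
      · have h1 : (j + 1 + 1) % (k0 + 1) = 0 := by rw [← h']; simp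
        simp only [h1, List.getElem_cons_zero, List.getElem_cons_succ,
          List.getElem_map, List.getElem_range]
        have hτx := hτf _ (hxmem j)
        rw [show τ ((τ ^ j) (σ v)) = v by
          rw [show τ ((τ ^ j) (σ v)) = (τ ^ (j+1)) (σ v) by
            rw [pow_succ', Equiv.Perm.mul_apply], h']
          exact hk0v] at hτx
        exact hτx

/-- No simple directed cycle of `A` has all entries nonzero. -/
lemma no_cycle_list {n : ℕ} (A : Matrix (Fin n) (Fin n) ℂ)
    (h : ∀ S : Finset (Fin n), S.Nonempty → cycleSum A S = 0) :
    ∀ (m : ℕ) (l : List (Fin n)), l.length = m → l.Nodup → l ≠ [] →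
      (∀ i : ℕ, (hi : i < l.length) →
        A (l[i]'hi) (l[(i+1) % l.length]'(Nat.mod_lt _ (Nat.pos_of_ne_zero
          (by intro hc; simp [List.length_eq_zero_iff] at hc; simp_all)))) ≠ 0) → False := by
  intro m
  induction m using Nat.strong_induction_on with
  | _ m IH =>
  intro l hlm hnd hne hedge
  set S : Finset (Fin n) := l.toFinset with hSdef
  have hScard : S.card = l.length := List.toFinset_card_of_nodup hnd
  set σ : Equiv.Perm (Fin n) := l.formPerm with hσdef
  have hσcycle : σ.IsCycleOn (S : Set (Fin n)) := by
    rw [hSdef, List.coe_toFinset]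
    exact hnd.isCycleOn_formPerm
  have hσfix : ∀ i ∉ S, σ i = i := fun i hi =>
    List.formPerm_apply_of_notMem (by simpa [hSdef] using hi)
  have hσmem : σ ∈ Finset.univ.filter
      (fun σ : Equiv.Perm (Fin n) =>
        σ.IsCycleOn (S : Set (Fin n)) ∧ ∀ i ∉ S, σ i = i) := by
    simp only [Finset.mem_filter, Finset.mem_univ, true_and]
    exact ⟨hσcycle, hσfix⟩
  have hσprod : ∏ i ∈ S, A i (σ i) ≠ 0 := by
    rw [Finset.prod_ne_zero_iff]
    intro x hx
    obtain ⟨i, hi, rfl⟩ := List.mem_iff_getElem.mp (by simpa [hSdef] using hx)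
    rw [hσdef, List.formPerm_apply_getElem _ hnd i hi]
    exact hedge i hi
  have hSne : S.Nonempty := by
    obtain ⟨a, ha⟩ := List.exists_mem_of_ne_nil l hne
    exact ⟨a, by simpa [hSdef] using ha⟩
  have hsum : cycleSum A S = 0 := h S hSne
  -- extract a second cycle with nonzero product
  have hexτ : ∃ τ ∈ Finset.univ.filter
      (fun σ : Equiv.Perm (Fin n) =>
        σ.IsCycleOn (S : Set (Fin n)) ∧ ∀ i ∉ S, σ i = i),
      τ ≠ σ ∧ ∏ i ∈ S, A i (τ i) ≠ 0 := by
    by_contra hc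
    push_neg at hc
    have := Finset.sum_eq_single_of_mem (f := fun τ => ∏ i ∈ S, A i (τ i)) σ hσmem
      (fun τ hτ hτne => by
        by_contra hp
        exact hp (hc τ hτ hτne))
    rw [cycleSum, this] at hsum
    exact hσprod hsum
  obtain ⟨τ, hτmem, hτne, hτprod⟩ := hexτ
  simp only [Finset.mem_filter, Finset.mem_univ, true_and] at hτmem
  obtain ⟨hτcycle, hτfix⟩ := hτmem
  obtain ⟨l', hl'nd, hl'ne, hl'lt, hl'edge⟩ :=
    cycle_step A S σ τ hσcycle hσfix hτcycle hτfix hτne hσprod hτprod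
  rw [hScard, hlm] at hl'lt
  exact IH l'.length hl'lt l' rfl hl'nd hl'ne hl'edge

lemma exists_source {n : ℕ} (A : Matrix (Fin n) (Fin n) ℂ)
    (nocyc : ∀ (m : ℕ) (l : List (Fin n)), l.length = m → l.Nodup → l ≠ [] →
      (∀ i : ℕ, (hi : i < l.length) →
        A (l[i]'hi) (l[(i+1) % l.length]'(Nat.mod_lt _ (Nat.pos_of_ne_zero
          (by intro hc; simp [List.length_eq_zero_iff] at hc; simp_all)))) ≠ 0) → False)
    (T : Finset (Fin n)) (hT : T.Nonempty) :
    ∃ u ∈ T, ∀ w ∈ T, A w u = 0 := by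
  by_contra hc
  push_neg at hc
  have hch : ∀ u : Fin n, ∃ w : Fin n, u ∈ T → w ∈ T ∧ A w u ≠ 0 := by
    intro u
    by_cases hu : u ∈ T
    · obtain ⟨w, hw, hwu⟩ := hc u hu
      exact ⟨w, fun _ => ⟨hw, hwu⟩⟩
    · exact ⟨u, fun h => absurd h hu⟩
  choose f hf using hch
  obtain ⟨u₀, hu₀⟩ := hT
  set x : ℕ → Fin n := fun j => f^[j] u₀ with hxdef
  have hxT : ∀ j, x j ∈ T := by
    intro j
    induction j with
    | zero => exact hu₀
    | succ j ihj =>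
      have : x (j+1) = f (x j) := Function.iterate_succ_apply' f j u₀
      rw [this]
      exact (hf (x j) ihj).1
  have hedge : ∀ j, A (x (j+1)) (x j) ≠ 0 := by
    intro j
    have : x (j+1) = f (x j) := Function.iterate_succ_apply' f j u₀
    rw [this]
    exact (hf (x j) (hxT j)).2
  have hex : ∃ d, 0 < d ∧ ∃ a, x (a + d) = x a := by
    obtain ⟨a, b, hab, heq⟩ := Finite.exists_ne_map_eq_of_infinite x
    rcases lt_or_gt_of_ne hab with h' | h'
    · exact ⟨b - a, by omega, a, by rw [show a + (b - a) = b by omega]; exact heq.symm⟩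
    · exact ⟨a - b, by omega, b, by rw [show b + (a - b) = a by omega]; exact heq⟩
  set k := Nat.find hex with hkdef
  obtain ⟨hkpos, a₀, ha₀⟩ := Nat.find_spec hex
  have key : ∀ p q : ℕ, p < q → q - p < k → x p = x q → False := by
    intro p q hpq hqp heq
    exact Nat.find_min hex hqp ⟨by omega, p, by rw [show p + (q - p) = q by omega]; exact heq.symm⟩
  set l : List (Fin n) := (List.range k).map (fun i => x (a₀ + k - 1 - i)) with hldef
  have hlen : l.length = k := by simp [hldef]
  have hlne : l ≠ [] := by
    rw [hldef]
    simp [List.map_eq_nil_iff, List.range_eq_nil]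
    omega
  have hlnd : l.Nodup := by
    refine List.Nodup.map_on ?_ (List.nodup_range)
    intro i hi j hj hij
    rw [List.mem_range] at hi hj
    by_contra hne
    rcases lt_or_gt_of_ne hne with h' | h'
    · exact key (a₀ + k - 1 - j) (a₀ + k - 1 - i) (by omega) (by omega) hij.symm
    · exact key (a₀ + k - 1 - i) (a₀ + k - 1 - j) (by omega) (by omega) hij
  refine nocyc k l hlen hlnd hlne ?_
  intro i hi
  have hik : i < k := by rwa [hlen] at hi
  simp only [hldef, List.getElem_map, List.getElem_range, List.length_map, List.length_range]
  rcases lt_or_eq_of_le (Nat.succ_le_of_lt hik) with h' | h'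
  · have h1 : (i + 1) % k = i + 1 := Nat.mod_eq_of_lt h'
    simp only [h1]
    have h2 : a₀ + k - 1 - i = (a₀ + k - 1 - (i+1)) + 1 := by omega
    rw [h2]
    exact hedge _
  · have h'' : i + 1 = k := h'
    have h1 : (i + 1) % k = 0 := by rw [h'']; exact Nat.mod_self k
    simp only [h1]
    have h2 : a₀ + k - 1 - i = a₀ := by omega
    rw [h2]
    have := hedge (a₀ + k - 1)
    rw [show a₀ + k - 1 + 1 = a₀ + k by omega, ha₀] at this
    have h3 : a₀ + k - 1 - 0 = a₀ + k - 1 := by omega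
    rw [h3]
    exact this

lemma topo_list {n : ℕ} (A : Matrix (Fin n) (Fin n) ℂ)
    (src : ∀ T : Finset (Fin n), T.Nonempty → ∃ u ∈ T, ∀ w ∈ T, A w u = 0) :
    ∀ (m : ℕ) (T : Finset (Fin n)), T.card = m →
      ∃ l : List (Fin n), l.Nodup ∧ l.toFinset = T ∧
        ∀ i j : ℕ, (hi : i < l.length) → (hj : j < l.length) → i ≤ j →
          A (l[j]'hj) (l[i]'hi) = 0 := by
  intro m
  induction m with
  | zero =>
    intro T hT
    refine ⟨[], List.nodup_nil, ?_, by simp⟩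
    simp [Finset.card_eq_zero.mp hT]
  | succ m ihm =>
    intro T hT
    have hTne : T.Nonempty := by rw [← Finset.card_pos, hT]; omega
    obtain ⟨u, huT, hu⟩ := src T hTne
    obtain ⟨l', hnd', htf', hprop'⟩ := ihm (T.erase u)
      (by rw [Finset.card_erase_of_mem huT, hT]; rfl)
    refine ⟨u :: l', ?_, ?_, ?_⟩
    · rw [List.nodup_cons]
      refine ⟨fun hu' => ?_, hnd'⟩
      have : u ∈ T.erase u := htf' ▸ List.mem_toFinset.mpr hu'
      exact (Finset.mem_erase.mp this).1 rfl
    · rw [List.toFinset_cons, htf', Finset.insert_erase huT]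
    · intro i j hi hj hij
      have hmem : ∀ p : ℕ, (hp : p < (u :: l').length) → ((u :: l')[p]'hp) ∈ T := by
        intro p hp
        have hp' : (u :: l')[p]'hp ∈ (u :: l') := List.getElem_mem _
        rcases List.mem_cons.mp hp' with h' | h'
        · rw [h']; exact huT
        · exact Finset.mem_of_mem_erase (htf' ▸ List.mem_toFinset.mpr h')
      rcases i with _ | i'
      · rw [List.getElem_cons_zero]
        exact hu _ (hmem j hj)
      · rcases j with _ | j'
        · omega
        · rw [List.getElem_cons_succ, List.getElem_cons_succ]
          exact hprop' i' j' (by simpa using hi) (by simpa using hj) (by omega)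

lemma permMat_mul_apply {n : ℕ} (σ : Equiv.Perm (Fin n)) (A : Matrix (Fin n) (Fin n) ℂ)
    (i j : Fin n) : (permMat σ * A) i j = A (σ⁻¹ i) j := by
  rw [Matrix.mul_apply]
  have : ∀ k : Fin n, (permMat σ i k) * A k j = (if k = σ⁻¹ i then A k j else 0) := by
    intro k
    simp only [permMat, Matrix.of_apply]
    by_cases hk : k = σ⁻¹ i
    · subst hk; simp
    · rw [if_neg hk, if_neg, zero_mul]
      intro hc
      exact hk (by rw [hc]; simp)
  simp_rw [this]
  simp

lemma mul_permMat_apply {n : ℕ} (σ : Equiv.Perm (Fin n)) (A : Matrix (Fin n) (Fin n) ℂ)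
    (i j : Fin n) : (A * permMat σ) i j = A i (σ j) := by
  rw [Matrix.mul_apply]
  have : ∀ k : Fin n, A i k * (permMat σ k j) = (if k = σ j then A i k else 0) := by
    intro k
    simp only [permMat, Matrix.of_apply]
    by_cases hk : k = σ j
    · subst hk; simp
    · rw [if_neg hk, if_neg hk, mul_zero]
  simp_rw [this]
  simp

lemma permMat_mul_inv {n : ℕ} (σ : Equiv.Perm (Fin n)) :
    permMat σ * permMat σ⁻¹ = 1 := by
  ext i j
  rw [permMat_mul_apply]
  simp [permMat, Matrix.one_apply, Equiv.Perm.inv_def, eq_comm, Equiv.symm_apply_eq]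

lemma conj_apply {n : ℕ} (σ : Equiv.Perm (Fin n)) (A : Matrix (Fin n) (Fin n) ℂ) (i j : Fin n) :
    (permMat σ * A * (permMat σ)⁻¹) i j = A (σ⁻¹ i) (σ⁻¹ j) := by
  rw [Matrix.inv_eq_right_inv (permMat_mul_inv σ), mul_permMat_apply, permMat_mul_apply]

theorem stmt18 (n : ℕ) (A : Matrix (Fin n) (Fin n) ℂ)
    (h : ∀ S : Finset (Fin n), S.Nonempty → cycleSum A S = 0) :
    ∃ σ : Equiv.Perm (Fin n), ∀ i j : Fin n, j ≤ i →
      (permMat σ * A * (permMat σ)⁻¹) i j = 0 := by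
  have nocyc := no_cycle_list A h
  have src := exists_source A nocyc
  obtain ⟨l, hnd, htf, hprop⟩ := topo_list A src (Finset.univ.card) Finset.univ rfl
  have hlen : l.length = n := by
    rw [← List.toFinset_card_of_nodup hnd, htf, Finset.card_univ, Fintype.card_fin]
  have hlt : ∀ i : Fin n, (i : ℕ) < l.length := fun i => by rw [hlen]; exact i.isLt
  set e : Fin n → Fin n := fun i => l[(i : ℕ)]'(hlt i) with hedef
  have hinj : Function.Injective e := by
    intro a b hab
    exact Fin.ext ((List.Nodup.getElem_inj_iff hnd).mp hab)
  have hbij : Function.Bijective e := Finite.injective_iff_bijective.mp hinj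
  refine ⟨(Equiv.ofBijective e hbij).symm, ?_⟩
  intro i j hij
  rw [conj_apply]
  have hinv : ((Equiv.ofBijective e hbij).symm : Equiv.Perm (Fin n))⁻¹ =
      (Equiv.ofBijective e hbij : Equiv.Perm (Fin n)) := by
    rw [Equiv.Perm.inv_def, Equiv.symm_symm]
  rw [hinv]
  have happ : ∀ x : Fin n, (Equiv.ofBijective e hbij) x = e x := fun x => rfl
  rw [happ, happ]
  exact hprop (j : ℕ) (i : ℕ) (hlt j) (hlt i) hij
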